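/- The ratio ⟨a,b,c,d⟩° / ⟨a,b,c⟩° equals ∑_{k=0}^{m} (-1)^{d+k} C(a,k)C(b,k)C(c,k)·C(1+a+b+c+d-k, d-k) / (C(a+d,d)C(b+d,d)C(c+d,d)), where ⟨a,b,c⟩° and ⟨a,b,c,d⟩° are defined as in Proposition 5.1 and m = min{a,b,c,d}. -/

import Mathlib

open Nat Finset

/-- The three-circle chromatic evaluation `⟨a,b,c⟩°` (Eq. 5.3). -/
noncomputable def threeCircle (a b c : ℕ) : ℚ :=
  (-1 : ℚ) ^ (a + b + c) *
    ((a ! : ℚ) * (b ! : ℚ) * (c ! : ℚ) * ((a + b + c + 1)! : ℚ)) /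
    (((a + b)! : ℚ) * ((b + c)! : ℚ) * ((c + a)! : ℚ))

/-- The Descartes four-circle chromatic evaluation `⟨a,b,c,d⟩°` (Eq. 5.4). -/
noncomputable def fourCircle (a b c d : ℕ) : ℚ :=
  ∑ k ∈ range (min a (min b (min c d)) + 1),
    (-1 : ℚ) ^ (a + b + c + d + k) *
      ((a.choose k : ℚ) * (b.choose k : ℚ) * (c.choose k : ℚ) * (d.choose k : ℚ) *
        (((a + b + c + d + 1)! : ℚ) /
          ((a ! : ℚ) * (b ! : ℚ) * (c ! : ℚ) * (d ! : ℚ) * (1! : ℚ)))) /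
      (((a + b).choose a : ℚ) * ((a + c).choose a : ℚ) * ((a + d).choose a : ℚ) *
        ((b + c).choose b : ℚ) * ((b + d).choose b : ℚ) * ((c + d).choose c : ℚ) *
        ((a + b + c + d + 1).choose k : ℚ))

set_option maxHeartbeats 4000000 in
theorem stmt_11 (a b c d : ℕ) :
    fourCircle a b c d / threeCircle a b c
      = ∑ k ∈ range (min a (min b (min c d)) + 1),
          (-1 : ℚ) ^ (d + k) *
            ((a.choose k : ℚ) * (b.choose k : ℚ) * (c.choose k : ℚ) *
              ((1 + a + b + c + d - k).choose (d - k) : ℚ)) /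
            (((a + d).choose d : ℚ) * ((b + d).choose d : ℚ) * ((c + d).choose d : ℚ)) := by
  rw [fourCircle, Finset.sum_div]
  refine Finset.sum_congr rfl fun k hk => ?_
  simp only [Finset.mem_range, Nat.lt_succ_iff, le_min_iff] at hk
  obtain ⟨hka, hkb, hkc, hkd⟩ := hk
  obtain ⟨a, rfl⟩ := Nat.exists_eq_add_of_le hka
  obtain ⟨b, rfl⟩ := Nat.exists_eq_add_of_le hkb
  obtain ⟨c, rfl⟩ := Nat.exists_eq_add_of_le hkc
  obtain ⟨d, rfl⟩ := Nat.exists_eq_add_of_le hkd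
  rw [threeCircle]
  have e1 : 1 + (k+a) + (k+b) + (k+c) + (k+d) - k = a+b+c+d+3*k+1 := by omega
  have e2 : (k+a) + (k+b) + (k+c) + (k+d) + 1 = a+b+c+d+4*k+1 := by omega
  have e3 : (k+d) - k = d := by omega
  rw [e1, e2, e3]
  rw [Nat.cast_choose ℚ (show k ≤ k+a by omega), Nat.cast_choose ℚ (show k ≤ k+b by omega),
    Nat.cast_choose ℚ (show k ≤ k+c by omega), Nat.cast_choose ℚ (show k ≤ k+d by omega),
    Nat.cast_choose ℚ (show (k+a) ≤ (k+a)+(k+b) by omega),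
    Nat.cast_choose ℚ (show (k+a) ≤ (k+a)+(k+c) by omega),
    Nat.cast_choose ℚ (show (k+a) ≤ (k+a)+(k+d) by omega),
    Nat.cast_choose ℚ (show (k+b) ≤ (k+b)+(k+c) by omega),
    Nat.cast_choose ℚ (show (k+b) ≤ (k+b)+(k+d) by omega),
    Nat.cast_choose ℚ (show (k+c) ≤ (k+c)+(k+d) by omega),
    Nat.cast_choose ℚ (show k ≤ a+b+c+d+4*k+1 by omega),
    Nat.cast_choose ℚ (show d ≤ a+b+c+d+3*k+1 by omega),
    Nat.cast_choose ℚ (show (k+d) ≤ (k+a)+(k+d) by omega),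
    Nat.cast_choose ℚ (show (k+d) ≤ (k+b)+(k+d) by omega),
    Nat.cast_choose ℚ (show (k+d) ≤ (k+c)+(k+d) by omega)]
  have s1 : (k+a)-k = a := by omega
  have s2 : (k+b)-k = b := by omega
  have s3 : (k+c)-k = c := by omega
  have s4 : (k+d)-k = d := by omega
  have s5 : (k+a)+(k+b)-(k+a) = k+b := by omega
  have s6 : (k+a)+(k+c)-(k+a) = k+c := by omega
  have s7 : (k+a)+(k+d)-(k+a) = k+d := by omega
  have s8 : (k+b)+(k+c)-(k+b) = k+c := by omega
  have s9 : (k+b)+(k+d)-(k+b) = k+d := by omega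
  have s10 : (k+c)+(k+d)-(k+c) = k+d := by omega
  have s11 : a+b+c+d+4*k+1-k = a+b+c+d+3*k+1 := by omega
  have s12 : a+b+c+d+3*k+1-d = a+b+c+3*k+1 := by omega
  have s13 : (k+a)+(k+d)-(k+d) = k+a := by omega
  have s14 : (k+b)+(k+d)-(k+d) = k+b := by omega
  have s15 : (k+c)+(k+d)-(k+c+(k+d)-(k+c)) = k+c := by omega
  rw [s1, s2, s3, s4, s5, s6, s7, s8, s9, s10, s11, s12, s13, s14]
  have e4 : (k+a)+(k+b)+(k+c)+1 = a+b+c+3*k+1 := by omega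
  rw [e4]
  rw [show (k+c)+(k+d)-(k+d) = k+c by omega]
  have F : ∀ n : ℕ, ((n ! : ℚ)) ≠ 0 := fun n => Nat.cast_ne_zero.2 (Nat.factorial_ne_zero n)
  have hm : ((-1 : ℚ)) ≠ 0 := by norm_num
  field_simp
  ring_nf
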